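/- (Inclusion (4.4)–(4.5) from the proof of Theorem 4.1(a).) Let n ≥ 1 and let ℓ be an integer with 0 ≤ ℓ ≤ ⌊n/2⌋. Then the set { P (H_2(μ̃_1) ⊕ ⋯ ⊕ H_2(μ̃_ℓ) ⊕ I_{n−2ℓ}) Pᵀ : P ∈ ℂ^{n×n} invertible, each μ̃_i satisfying |μ̃_i| > 1 or μ̃_i = e^{iθ} with 0 < θ < π, and μ̃_i ≠ μ̃_{i'} for i ≠ i' } (i.e., the congruence bundle ℬᶜ(⊕_{i=1}^ℓ H_2(μ_i) ⊕ I_{n−2ℓ}) with pairwise distinct Type II-(a) parameters) is contained in the closure of the generic congruence bundle 𝒢. -/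

import Mathlib

open Matrix

noncomputable section

/-- The `k × k` Jordan block `J_k(μ)` (eigenvalue `μ` on the diagonal, `1` on the
superdiagonal). -/
def Jblock (k : ℕ) (μ : ℂ) : Matrix (Fin k) (Fin k) ℂ :=
  Matrix.of fun i j =>
    if (j : ℕ) = (i : ℕ) then μ else if (j : ℕ) = (i : ℕ) + 1 then 1 else 0

/-- The `k × k` matrix `Γ_k`: in 1-based indexing, the `(i,j)` entry is `(-1)^(k-i)`
when `j = k+1-i` or `j = k+2-i`, and `0` otherwise. -/
def Gamma (k : ℕ) : Matrix (Fin k) (Fin k) ℂ :=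
  Matrix.of fun i j =>
    if (i : ℕ) + (j : ℕ) = k - 1 ∨ (i : ℕ) + (j : ℕ) = k then
      (-1 : ℂ) ^ (k - 1 - (i : ℕ)) else 0

/-- Block-diagonal direct sum of two square complex matrices. -/
def dsum {m n : ℕ} (A : Matrix (Fin m) (Fin m) ℂ) (B : Matrix (Fin n) (Fin n) ℂ) :
    Matrix (Fin (m + n)) (Fin (m + n)) ℂ :=
  Matrix.reindex finSumFinEquiv finSumFinEquiv (Matrix.fromBlocks A 0 0 B)

/-- The `2k × 2k` matrix `H_{2k}(μ) = [[0, I_k], [J_k(μ), 0]]`. -/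
def Hblock (k : ℕ) (μ : ℂ) : Matrix (Fin (k + k)) (Fin (k + k)) ℂ :=
  Matrix.reindex finSumFinEquiv finSumFinEquiv (Matrix.fromBlocks 0 1 (Jblock k μ) 0)

/-- The total size of a family of sizes `p : Fin q → ℕ`. -/
def finSize : {q : ℕ} → (Fin q → ℕ) → ℕ
  | 0, _ => 0
  | _ + 1, p => p 0 + finSize fun i => p i.succ

/-- Block-diagonal direct sum of a family of square complex matrices of sizes
`p 0, …, p (q-1)`. -/
def finDsum : {q : ℕ} → (p : Fin q → ℕ) →
    ((i : Fin q) → Matrix (Fin (p i)) (Fin (p i)) ℂ) →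
    Matrix (Fin (finSize p)) (Fin (finSize p)) ℂ
  | 0, _, _ => 0
  | _ + 1, p, M => dsum (M 0) (finDsum (fun i => p i.succ) fun i => M i.succ)

/-- The `2 × 2` block `H_2(μ) = [[0, 1], [μ, 0]]`. -/
def H2 (μ : ℂ) : Matrix (Fin 2) (Fin 2) ℂ := !![0, 1; μ, 0]

/-- The block-diagonal direct sum `H_2(μ_1) ⊕ ⋯ ⊕ H_2(μ_r)`. -/
def pairH (r : ℕ) (mu : Fin r → ℂ) :
    Matrix (Fin (finSize fun _ : Fin r => 2)) (Fin (finSize fun _ : Fin r => 2)) ℂ :=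
  finDsum (fun _ => 2) fun i => H2 (mu i)

/-- A complex number `μ` is a valid Type II-(a) parameter when `|μ| > 1` or
`μ = e^(iθ)` with `0 < θ < π`. -/
def TypeIIaParam (μ : ℂ) : Prop :=
  1 < ‖μ‖ ∨ ∃ θ : ℝ, 0 < θ ∧ θ < Real.pi ∧ μ = Complex.exp ((θ : ℂ) * Complex.I)

/-- The generic congruence bundle `𝒢 ⊆ ℂ^{n×n}`: all matrices `P D Pᵀ` with `P`
invertible, where `D = H_2(μ_1) ⊕ ⋯ ⊕ H_2(μ_{n/2})` when `n` is even and
`D = H_2(μ_1) ⊕ ⋯ ⊕ H_2(μ_{⌊n/2⌋}) ⊕ [1]` when `n` is odd, the parameters `μ_i` being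
pairwise distinct Type II-(a) parameters. -/
def genCong (n : ℕ) : Set (Matrix (Fin n) (Fin n) ℂ) :=
  {A | (Even n ∧
      ∃ (h : finSize (fun _ : Fin (n / 2) => 2) = n) (mu : Fin (n / 2) → ℂ)
        (P : Matrix (Fin n) (Fin n) ℂ),
        IsUnit P ∧ (∀ i, TypeIIaParam (mu i)) ∧ (∀ i i', i ≠ i' → mu i ≠ mu i') ∧
        A = P * Matrix.reindex (finCongr h) (finCongr h) (pairH (n / 2) mu) * Pᵀ) ∨
    (¬Even n ∧
      ∃ (h : finSize (fun _ : Fin (n / 2) => 2) + 1 = n) (mu : Fin (n / 2) → ℂ)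
        (P : Matrix (Fin n) (Fin n) ℂ),
        IsUnit P ∧ (∀ i, TypeIIaParam (mu i)) ∧ (∀ i i', i ≠ i' → mu i ≠ mu i') ∧
        A = P * Matrix.reindex (finCongr h) (finCongr h)
              (dsum (pairH (n / 2) mu) !![(1 : ℂ)]) * Pᵀ)}

lemma finSize_two (r : ℕ) : finSize (fun _ : Fin r => 2) = 2 * r := by
  induction r with
  | zero => rfl
  | succ k ih =>
    show 2 + finSize (fun _ : Fin k => 2) = _
    rw [ih]; ring

def BlkM (n : ℕ) (f : ℕ → Matrix (Fin 2) (Fin 2) ℂ) : Matrix (Fin n) (Fin n) ℂ :=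
  Matrix.of fun i j =>
    if (i : ℕ) / 2 = (j : ℕ) / 2 then
      f ((i : ℕ) / 2) ⟨(i : ℕ) % 2, Nat.mod_lt _ (by norm_num)⟩
        ⟨(j : ℕ) % 2, Nat.mod_lt _ (by norm_num)⟩
    else 0

lemma finSumFinEquiv_symm_eq {m n : ℕ} (i : Fin (m + n)) :
    finSumFinEquiv.symm i = if h : (i : ℕ) < m then Sum.inl ⟨i, h⟩
      else Sum.inr ⟨(i : ℕ) - m, by omega⟩ := by
  split_ifs with h
  · rw [Equiv.symm_apply_eq, finSumFinEquiv_apply_left]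
    ext; simp
  · rw [Equiv.symm_apply_eq, finSumFinEquiv_apply_right]
    ext; simp; omega

lemma dsum_apply {m n : ℕ} (A : Matrix (Fin m) (Fin m) ℂ) (B : Matrix (Fin n) (Fin n) ℂ)
    (i j : Fin (m + n)) :
    dsum A B i j = if h : (i : ℕ) < m then
        (if h' : (j : ℕ) < m then A ⟨i, h⟩ ⟨j, h'⟩ else 0)
      else if h' : (j : ℕ) < m then 0
        else B ⟨(i : ℕ) - m, by omega⟩ ⟨(j : ℕ) - m, by omega⟩ := by
  rw [dsum, reindex_apply, submatrix_apply, finSumFinEquiv_symm_eq, finSumFinEquiv_symm_eq]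
  split_ifs with h h' h' <;> simp [Matrix.fromBlocks]

lemma H2_congr {a b : ℂ} (h : a = b) {x x' y y' : Fin 2} (hx : x = x') (hy : y = y') :
    H2 a x y = H2 b x' y' := by subst h; subst hx; subst hy; rfl

lemma pairH_apply : ∀ (r : ℕ) (mu : Fin r → ℂ) (i j : Fin (finSize fun _ : Fin r => 2)),
    pairH r mu i j =
      if (i : ℕ) / 2 = (j : ℕ) / 2 then
        H2 (mu ⟨(i : ℕ) / 2, by have := Nat.lt_of_lt_of_eq i.isLt (finSize_two _); omega⟩)
          ⟨(i : ℕ) % 2, by omega⟩ ⟨(j : ℕ) % 2, by omega⟩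
      else 0 := by
  intro r
  induction r with
  | zero =>
    intro mu i j
    exact absurd (Nat.lt_of_lt_of_eq i.isLt (finSize_two 0)) (by omega)
  | succ k ih =>
    intro mu i j
    have hi := Nat.lt_of_lt_of_eq i.isLt (finSize_two _)
    have hj := Nat.lt_of_lt_of_eq j.isLt (finSize_two _)
    show dsum (H2 (mu 0)) (pairH k fun t => mu t.succ) i j = _
    refine (dsum_apply (H2 (mu 0)) (pairH k fun t => mu t.succ) i j).trans ?_
    by_cases h1 : (i : ℕ) < 2 <;> by_cases h2 : (j : ℕ) < 2
    · rw [dif_pos h1, dif_pos h2, if_pos (by omega : (i : ℕ) / 2 = (j : ℕ) / 2)]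
      refine H2_congr (congrArg mu (Fin.ext ?_)) (Fin.ext ?_) (Fin.ext ?_) <;>
        simp only [Fin.val_succ, Fin.val_mk, Fin.val_zero] <;> omega
    · rw [dif_pos h1, dif_neg h2, if_neg (by omega)]
    · rw [dif_neg h1, dif_pos h2, if_neg (by omega)]
    · rw [dif_neg h1, dif_neg h2, ih]
      by_cases hc : (i : ℕ) / 2 = (j : ℕ) / 2
      · rw [if_pos (by omega : ((i:ℕ)-2)/2 = ((j:ℕ)-2)/2), if_pos hc]
        refine H2_congr (congrArg mu (Fin.ext ?_)) (Fin.ext ?_) (Fin.ext ?_) <;>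
          simp only [Fin.val_succ, Fin.val_mk, Fin.val_zero] <;> omega
      · rw [if_neg (by simp only [Fin.val_mk]; omega), if_neg hc]

lemma M2_congr (F : ℕ → Matrix (Fin 2) (Fin 2) ℂ) {a a' : ℕ} (ha : a = a')
    {x x' y y' : Fin 2} (hx : x = x') (hy : y = y') : F a x y = F a' x' y' := by
  subst ha; subst hx; subst hy; rfl

lemma BlkM_apply (n : ℕ) (f : ℕ → Matrix (Fin 2) (Fin 2) ℂ) (i j : Fin n) :
    BlkM n f i j = if (i : ℕ) / 2 = (j : ℕ) / 2 then
      f ((i : ℕ) / 2) ⟨(i : ℕ) % 2, by omega⟩ ⟨(j : ℕ) % 2, by omega⟩ else 0 := rfl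

lemma BlkM_congr {n : ℕ} {f g : ℕ → Matrix (Fin 2) (Fin 2) ℂ}
    (h : ∀ b, 2 * b < n → f b = g b) : BlkM n f = BlkM n g := by
  ext i j
  rw [BlkM_apply, BlkM_apply]
  split_ifs with hc
  · rw [h ((i : ℕ) / 2) (by omega)]
  · rfl

lemma BlkM_transpose (n : ℕ) (f : ℕ → Matrix (Fin 2) (Fin 2) ℂ) :
    (BlkM n f)ᵀ = BlkM n fun b => (f b)ᵀ := by
  ext i j
  rw [transpose_apply, BlkM_apply, BlkM_apply]
  by_cases hc : (j : ℕ) / 2 = (i : ℕ) / 2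
  · rw [if_pos hc, if_pos hc.symm]
    exact M2_congr _ hc (rfl) (rfl)
  · rw [if_neg hc, if_neg (fun h => hc h.symm)]

lemma BlkM_one (n : ℕ) : BlkM n (fun _ => 1) = 1 := by
  ext i j
  rw [BlkM_apply]
  by_cases hij : i = j
  · subst hij
    rw [if_pos rfl, Matrix.one_apply_eq, Matrix.one_apply_eq]
  · have hv : (i : ℕ) ≠ (j : ℕ) := fun h => hij (Fin.ext h)
    rw [Matrix.one_apply_ne hij]
    split_ifs with hc
    · exact Matrix.one_apply_ne (fun h => hv (by
        have := congrArg Fin.val h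
        simp only [Fin.val_mk] at this
        omega))
    · rfl

lemma BlkM_mul {n : ℕ} (f g : ℕ → Matrix (Fin 2) (Fin 2) ℂ)
    (hodd : n % 2 = 1 → f (n / 2) 0 1 = 0) :
    BlkM n f * BlkM n g = BlkM n fun b => f b * g b := by
  ext i j
  rw [Matrix.mul_apply, BlkM_apply]
  by_cases hij : (i : ℕ) / 2 = (j : ℕ) / 2
  · set b := (i : ℕ) / 2 with hb
    have hbn : 2 * b ≤ (i : ℕ) := by omega
    have h2b : 2 * b < n := lt_of_le_of_lt hbn i.isLt
    rw [if_pos hij]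
    by_cases hk : 2 * b + 1 < n
    · have key : ∀ k : Fin n, BlkM n f i k * BlkM n g k j =
          (if k = ⟨2 * b, h2b⟩ then
            f b ⟨(i : ℕ) % 2, by omega⟩ ⟨0, by norm_num⟩ *
            g b ⟨0, by norm_num⟩ ⟨(j : ℕ) % 2, by omega⟩ else 0) +
          (if k = ⟨2 * b + 1, hk⟩ then
            f b ⟨(i : ℕ) % 2, by omega⟩ ⟨1, by norm_num⟩ *
            g b ⟨1, by norm_num⟩ ⟨(j : ℕ) % 2, by omega⟩ else 0) := by
        intro k
        rw [BlkM_apply, BlkM_apply]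
        by_cases hk0 : (k : ℕ) = 2 * b
        · have e0 : k = ⟨2 * b, h2b⟩ := Fin.ext hk0
          have ne1 : k ≠ ⟨2 * b + 1, hk⟩ := by
            intro h; have := congrArg Fin.val h
            simp only [Fin.val_mk] at this; omega
          rw [if_pos (show (i : ℕ) / 2 = (k : ℕ) / 2 by omega),
            if_pos (show (k : ℕ) / 2 = (j : ℕ) / 2 by omega),
            if_pos e0, if_neg ne1, add_zero]
          exact congrArg₂ (· * ·)
            (M2_congr f (by omega) (Fin.ext (by simp only [Fin.val_mk]))
              (Fin.ext (by simp only [Fin.val_mk]; omega)))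
            (M2_congr g (by omega) (Fin.ext (by simp only [Fin.val_mk]; omega))
              (Fin.ext (by simp only [Fin.val_mk])))
        · by_cases hk1 : (k : ℕ) = 2 * b + 1
          · have e1 : k = ⟨2 * b + 1, hk⟩ := Fin.ext hk1
            have ne0 : k ≠ ⟨2 * b, h2b⟩ := by
              intro h; have := congrArg Fin.val h
              simp only [Fin.val_mk] at this; omega
            rw [if_pos (show (i : ℕ) / 2 = (k : ℕ) / 2 by omega),
              if_pos (show (k : ℕ) / 2 = (j : ℕ) / 2 by omega),
              if_pos e1, if_neg ne0, zero_add]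
            exact congrArg₂ (· * ·)
              (M2_congr f (by omega) (Fin.ext (by simp only [Fin.val_mk]))
                (Fin.ext (by simp only [Fin.val_mk]; omega)))
              (M2_congr g (by omega) (Fin.ext (by simp only [Fin.val_mk]; omega))
                (Fin.ext (by simp only [Fin.val_mk])))
          · have ne0 : k ≠ ⟨2 * b, h2b⟩ := by
              intro h; have := congrArg Fin.val h
              simp only [Fin.val_mk] at this; omega
            have ne1 : k ≠ ⟨2 * b + 1, hk⟩ := by
              intro h; have := congrArg Fin.val h
              simp only [Fin.val_mk] at this; omega
            rw [if_neg (show ¬ (i : ℕ) / 2 = (k : ℕ) / 2 by omega),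
              if_neg ne0, if_neg ne1, zero_mul, add_zero]
      rw [Finset.sum_congr rfl (fun k _ => key k), Finset.sum_add_distrib,
        Finset.sum_ite_eq' Finset.univ, Finset.sum_ite_eq' Finset.univ,
        if_pos (Finset.mem_univ _), if_pos (Finset.mem_univ _), Matrix.mul_apply,
        Fin.sum_univ_two]
      refine congrArg₂ (· + ·) ?_ ?_ <;> exact congrArg₂ (· * ·)
        (M2_congr _ rfl rfl (Fin.ext (by simp only [Fin.val_mk]; rfl)))
        (M2_congr _ rfl (Fin.ext (by simp only [Fin.val_mk]; rfl)) rfl)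
    · -- last odd block: only k = 2*b in range
      have hn : n = 2 * b + 1 := by omega
      have hnodd : n % 2 = 1 := by omega
      have hib : (i : ℕ) = 2 * b := by omega
      have hjb : (j : ℕ) = 2 * b := by omega
      have key : ∀ k : Fin n, BlkM n f i k * BlkM n g k j =
          (if k = ⟨2 * b, h2b⟩ then
            f b ⟨(i : ℕ) % 2, by omega⟩ ⟨0, by norm_num⟩ *
            g b ⟨0, by norm_num⟩ ⟨(j : ℕ) % 2, by omega⟩ else 0) := by
        intro k
        rw [BlkM_apply, BlkM_apply]
        by_cases hk0 : (k : ℕ) = 2 * b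
        · have e0 : k = ⟨2 * b, h2b⟩ := Fin.ext hk0
          rw [if_pos (show (i : ℕ) / 2 = (k : ℕ) / 2 by omega),
            if_pos (show (k : ℕ) / 2 = (j : ℕ) / 2 by omega), if_pos e0]
          exact congrArg₂ (· * ·)
            (M2_congr f (by omega) (Fin.ext (by simp only [Fin.val_mk]))
              (Fin.ext (by simp only [Fin.val_mk]; omega)))
            (M2_congr g (by omega) (Fin.ext (by simp only [Fin.val_mk]; omega))
              (Fin.ext (by simp only [Fin.val_mk])))
        · have hkk := k.isLt
          have ne0 : k ≠ ⟨2 * b, h2b⟩ := by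
            intro h; have := congrArg Fin.val h
            simp only [Fin.val_mk] at this; omega
          rw [if_neg (show ¬ (i : ℕ) / 2 = (k : ℕ) / 2 by omega), if_neg ne0, zero_mul]
      rw [Finset.sum_congr rfl (fun k _ => key k), Finset.sum_ite_eq' Finset.univ,
        if_pos (Finset.mem_univ _), Matrix.mul_apply, Fin.sum_univ_two]
      have hf01 : f b ⟨(i : ℕ) % 2, by omega⟩ (1 : Fin 2) = 0 := by
        have h00 : f (n / 2) 0 1 = 0 := hodd hnodd
        have hb2 : n / 2 = b := by omega
        rw [hb2] at h00
        rw [show (⟨(i : ℕ) % 2, by omega⟩ : Fin 2) = 0 from Fin.ext (by simp only [Fin.val_mk]; omega)]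
        exact h00
      rw [hf01, zero_mul, add_zero]
      exact congrArg₂ (· * ·)
        (M2_congr _ rfl rfl (Fin.ext (by simp only [Fin.val_mk]; rfl)))
        (M2_congr _ rfl (Fin.ext (by simp only [Fin.val_mk]; rfl)) rfl)
  · rw [if_neg hij]
    refine Finset.sum_eq_zero fun k _ => ?_
    rw [BlkM_apply, BlkM_apply]
    by_cases h1 : (i : ℕ) / 2 = (k : ℕ) / 2
    · rw [if_neg (show ¬ (k : ℕ) / 2 = (j : ℕ) / 2 by omega), mul_zero]
    · rw [if_neg h1, zero_mul]

lemma reindex_pairH {r n : ℕ} (h : finSize (fun _ : Fin r => 2) = n) (mu : Fin r → ℂ)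
    (f : ℕ → Matrix (Fin 2) (Fin 2) ℂ)
    (hf : ∀ b (hb : b < r), f b = H2 (mu ⟨b, hb⟩)) :
    Matrix.reindex (finCongr h) (finCongr h) (pairH r mu) = BlkM n f := by
  have hsz : finSize (fun _ : Fin r => 2) = 2 * r := finSize_two r
  ext i j
  rw [reindex_apply, submatrix_apply, pairH_apply, BlkM_apply]
  simp only [finCongr_symm, finCongr_apply, Fin.coe_cast]
  have hi : (i : ℕ) < 2 * r := by have := i.isLt; omega
  split_ifs with hc
  · rw [hf ((i : ℕ) / 2) (by omega)]
  · rfl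

lemma reindex_dsum_pairH {r m n : ℕ} (h : finSize (fun _ : Fin r => 2) + m = n)
    (mu : Fin r → ℂ) (f : ℕ → Matrix (Fin 2) (Fin 2) ℂ)
    (hf1 : ∀ b (hb : b < r), f b = H2 (mu ⟨b, hb⟩))
    (hf2 : ∀ b, r ≤ b → f b = 1) :
    Matrix.reindex (finCongr h) (finCongr h)
      (dsum (pairH r mu) (1 : Matrix (Fin m) (Fin m) ℂ)) = BlkM n f := by
  have hsz : finSize (fun _ : Fin r => 2) = 2 * r := finSize_two r
  ext i j
  rw [reindex_apply, submatrix_apply, dsum_apply, BlkM_apply]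
  have hv1 : (((finCongr h).symm i : Fin _) : ℕ) = (i : ℕ) := rfl
  have hv2 : (((finCongr h).symm j : Fin _) : ℕ) = (j : ℕ) := rfl
  simp only [hv1, hv2]
  have hi := i.isLt
  have hj := j.isLt
  by_cases h1 : (i : ℕ) < finSize (fun _ : Fin r => 2) <;>
    by_cases h2 : (j : ℕ) < finSize (fun _ : Fin r => 2) <;>
    rw [hsz] at h1 h2
  · rw [dif_pos (hsz ▸ h1), dif_pos (hsz ▸ h2), pairH_apply]
    simp only [Fin.val_mk]
    split_ifs with hc
    · rw [hf1 ((i : ℕ) / 2) (by omega)]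
    · rfl
  · rw [dif_pos (hsz ▸ h1), dif_neg (hsz ▸ h2), if_neg (by omega)]
  · rw [dif_neg (hsz ▸ h1), dif_pos (hsz ▸ h2), if_neg (by omega)]
  · rw [dif_neg (hsz ▸ h1), dif_neg (hsz ▸ h2), Matrix.one_apply]
    by_cases hij : (i : ℕ) = (j : ℕ)
    · rw [if_pos (Fin.ext (by simp only [Fin.val_mk]; omega)), if_pos (by omega),
        hf2 ((i : ℕ) / 2) (by omega), Matrix.one_apply,
        if_pos (Fin.ext (by simp only [Fin.val_mk]; omega))]
    · rw [if_neg (fun hh : _ = _ => hij (by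
        have := congrArg Fin.val hh
        simp only [Fin.val_mk] at this
        omega))]
      split_ifs with hc
      · rw [hf2 ((i : ℕ) / 2) (by omega), Matrix.one_apply,
          if_neg (fun hh : _ = _ => hij (by
            have := congrArg Fin.val hh
            simp only [Fin.val_mk] at this
            omega))]
      · rfl

def Qm : Matrix (Fin 2) (Fin 2) ℂ := !![1, 1/2; -Complex.I, Complex.I/2]

def Qminv : Matrix (Fin 2) (Fin 2) ℂ := !![1/2, Complex.I/2; 1, -Complex.I]

lemma Qm_mul_Qminv : Qm * Qminv = 1 := by
  ext i j
  fin_cases i <;> fin_cases j <;>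
    simp [Qm, Qminv, Matrix.mul_apply, Fin.sum_univ_two, Matrix.one_apply] <;>
    ring_nf <;>
    simp [Complex.I_sq] <;> ring

lemma Qmt : Qmᵀ = !![1, -Complex.I; 1/2, Complex.I/2] := by
  ext i j
  fin_cases i <;> fin_cases j <;> simp [Qm]

lemma Qm_H2_one_Qmt : Qm * H2 1 * Qmᵀ = 1 := by
  rw [Qmt]
  ext i j
  fin_cases i <;> fin_cases j <;>
    simp [Qm, H2, Matrix.mul_apply, Fin.sum_univ_two, Matrix.one_apply] <;>
    ring_nf <;>
    simp [Complex.I_sq] <;> ring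

lemma H2_apply_decomp (μ : ℂ) (x y : Fin 2) :
    H2 μ x y = (!![0,1;0,0] : Matrix (Fin 2) (Fin 2) ℂ) x y
      + μ * (!![0,0;1,0] : Matrix (Fin 2) (Fin 2) ℂ) x y := by
  fin_cases x <;> fin_cases y <;> simp [H2]

lemma exp_mul_I_inj {x y : ℝ} (hx0 : 0 < x) (hx : x < Real.pi) (hy0 : 0 < y)
    (hy : y < Real.pi)
    (hexp : Complex.exp ((x : ℂ) * Complex.I) = Complex.exp ((y : ℂ) * Complex.I)) :
    x = y := by
  rw [Complex.exp_eq_exp_iff_exists_int] at hexp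
  obtain ⟨k, hk⟩ := hexp
  have h2 : (x : ℂ) * Complex.I = ((y : ℂ) + (k : ℂ) * (2 * (Real.pi : ℂ))) * Complex.I := by
    linear_combination hk
  have hC : (x : ℂ) = (y : ℂ) + (k : ℂ) * (2 * (Real.pi : ℂ)) :=
    mul_right_cancel₀ Complex.I_ne_zero h2
  have hR : x = y + (k : ℝ) * (2 * Real.pi) := by
    exact_mod_cast hC
  have hπ := Real.pi_pos
  rcases lt_trichotomy k 0 with hk0 | hk0 | hk0
  · have : (k : ℝ) ≤ -1 := by exact_mod_cast (show k ≤ -1 by omega)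
    nlinarith
  · subst hk0; simpa using hR
  · have : (1 : ℝ) ≤ (k : ℝ) := by exact_mod_cast hk0
    nlinarith

lemma exp_nat_mul_I (c : ℕ) (t : ℝ) :
    Complex.exp ((c : ℂ) * (t : ℂ) * Complex.I)
      = Complex.exp ((((c : ℝ) * t : ℝ) : ℂ) * Complex.I) := by
  norm_cast

lemma exp_nat_inj {c c' : ℕ} {t : ℝ} (ht : 0 < t) (hc : 1 ≤ c) (hc' : 1 ≤ c')
    (hcπ : (c : ℝ) * t < Real.pi) (hc'π : (c' : ℝ) * t < Real.pi)
    (h : Complex.exp ((c : ℂ) * (t : ℂ) * Complex.I)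
        = Complex.exp ((c' : ℂ) * (t : ℂ) * Complex.I)) :
    c = c' := by
  rw [exp_nat_mul_I, exp_nat_mul_I] at h
  have hp : (0 : ℝ) < (c : ℝ) * t :=
    mul_pos (by exact_mod_cast hc) ht
  have hp' : (0 : ℝ) < (c' : ℝ) * t :=
    mul_pos (by exact_mod_cast hc') ht
  have := exp_mul_I_inj hp hcπ hp' hc'π h
  have hcc : (c : ℝ) = c' := mul_right_cancel₀ (ne_of_gt ht) this
  exact_mod_cast hcc

lemma matone : !![(1 : ℂ)] = (1 : Matrix (Fin 1) (Fin 1) ℂ) := by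
  ext i j
  fin_cases i; fin_cases j; simp

/-- **Inclusions (4.4)–(4.5).**  For `0 ≤ ℓ ≤ ⌊n/2⌋`, the congruence bundle
`ℬᶜ(H_2(μ_1) ⊕ ⋯ ⊕ H_2(μ_ℓ) ⊕ I_{n-2ℓ})` (with pairwise distinct Type II-(a)
parameters) is contained in the closure of the generic congruence bundle `𝒢`. -/
theorem congBundle_H2_id_subset_closure_genCong (n ℓ : ℕ) (hn : 1 ≤ n)
    (hℓ : ℓ ≤ n / 2) :
    {A : Matrix (Fin n) (Fin n) ℂ |
      ∃ (h : finSize (fun _ : Fin ℓ => 2) + (n - 2 * ℓ) = n)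
        (mu : Fin ℓ → ℂ) (P : Matrix (Fin n) (Fin n) ℂ),
        IsUnit P ∧ (∀ i, TypeIIaParam (mu i)) ∧ (∀ i i', i ≠ i' → mu i ≠ mu i') ∧
        A = P * Matrix.reindex (finCongr h) (finCongr h)
              (dsum (pairH ℓ mu) (1 : Matrix (Fin (n - 2 * ℓ)) (Fin (n - 2 * ℓ)) ℂ)) * Pᵀ}
      ⊆ closure (genCong n) := by
  
  intro A hA
  obtain ⟨h, mu, P, hP, hIIa, hdist, hAeq⟩ := hA
  classical
  have hD : Matrix.reindex (finCongr h) (finCongr h)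
      (dsum (pairH ℓ mu) (1 : Matrix (Fin (n - 2 * ℓ)) (Fin (n - 2 * ℓ)) ℂ))
      = BlkM n (fun b => if hb : b < ℓ then H2 (mu ⟨b, hb⟩) else 1) :=
    reindex_dsum_pairH h mu _ (fun b hb => dif_pos hb) (fun b hb => dif_neg (by omega))
  set Rf : ℕ → Matrix (Fin 2) (Fin 2) ℂ :=
    fun b => if b < ℓ then 1 else if 2 * b + 1 < n then Qm else 1 with hRfdef
  set Rfi : ℕ → Matrix (Fin 2) (Fin 2) ℂ :=
    fun b => if b < ℓ then 1 else if 2 * b + 1 < n then Qminv else 1 with hRfidef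
  have hoddRf : n % 2 = 1 → Rf (n / 2) 0 1 = 0 := by
    intro hodd
    have h1 : ¬ (2 * (n / 2) + 1 < n) := by omega
    have h2 : ¬ (n / 2 < ℓ) := by omega
    simp only [hRfdef, if_neg h1, if_neg h2]
    simp [Matrix.one_apply]
  have hRinv : BlkM n Rf * BlkM n Rfi = 1 := by
    rw [BlkM_mul _ _ hoddRf]
    have h2 : BlkM n (fun b => Rf b * Rfi b) = BlkM n (fun _ => 1) := by
      apply BlkM_congr
      intro b hb
      simp only [hRfdef, hRfidef]
      split_ifs
      · exact one_mul 1
      · exact Qm_mul_Qminv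
      · exact one_mul 1
    rw [h2, BlkM_one]
  have hRunit : IsUnit (BlkM n Rf) := IsUnit.of_mul_eq_one _ hRinv
  set fD : ℝ → ℕ → Matrix (Fin 2) (Fin 2) ℂ := fun t b =>
    if hb : b < ℓ then H2 (mu ⟨b, hb⟩)
    else if 2 * b + 1 < n then
      H2 (Complex.exp (((b - ℓ + 1 : ℕ) : ℂ) * (t : ℂ) * Complex.I))
    else 1 with hfDdef
  set F : ℝ → Matrix (Fin n) (Fin n) ℂ := fun t =>
    (P * BlkM n Rf) * BlkM n (fD t) * (P * BlkM n Rf)ᵀ with hFdef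
  have hodd2 : ∀ t : ℝ, n % 2 = 1 → (fun b => Rf b * fD t b) (n / 2) 0 1 = 0 := by
    intro t hodd
    have h1 : ¬ (2 * (n / 2) + 1 < n) := by omega
    have h2 : ¬ (n / 2 < ℓ) := by omega
    simp only [hRfdef, hfDdef, if_neg h1, if_neg h2, dif_neg h2, mul_one]
    simp [Matrix.one_apply]
  have hRX : ∀ t : ℝ, BlkM n Rf * BlkM n (fD t) * (BlkM n Rf)ᵀ
      = BlkM n (fun b => Rf b * fD t b * (Rf b)ᵀ) := by
    intro t
    rw [BlkM_transpose, BlkM_mul _ _ hoddRf, BlkM_mul _ _ (hodd2 t)]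
  have hassoc : ∀ X : Matrix (Fin n) (Fin n) ℂ,
      (P * BlkM n Rf) * X * (P * BlkM n Rf)ᵀ
        = P * (BlkM n Rf * X * (BlkM n Rf)ᵀ) * Pᵀ := by
    intro X
    simp only [Matrix.transpose_mul, Matrix.mul_assoc]
  have hF0 : F 0 = A := by
    have e1 : BlkM n Rf * BlkM n (fD 0) * (BlkM n Rf)ᵀ
        = BlkM n (fun b => if hb : b < ℓ then H2 (mu ⟨b, hb⟩) else 1) := by
      rw [hRX 0]
      apply BlkM_congr
      intro b hb
      by_cases h1 : b < ℓ
      · simp only [hRfdef, hfDdef, if_pos h1, dif_pos h1, Matrix.transpose_one,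
          one_mul, mul_one]
      · by_cases h2 : 2 * b + 1 < n
        · simp only [hRfdef, hfDdef, if_neg h1, dif_neg h1, if_pos h2]
          have he : Complex.exp (((b - ℓ + 1 : ℕ) : ℂ) * ((0 : ℝ) : ℂ) * Complex.I)
              = 1 := by
            norm_num
          rw [he, Qm_H2_one_Qmt]
        · simp only [hRfdef, hfDdef, if_neg h1, dif_neg h1, if_neg h2,
            Matrix.transpose_one, one_mul, mul_one]
    rw [hFdef]
    show (P * BlkM n Rf) * BlkM n (fD 0) * (P * BlkM n Rf)ᵀ = A
    rw [hassoc, e1, hAeq, hD]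
  have hFcont : Continuous F := by
    have hBlk : Continuous fun t => BlkM n (fD t) := by
      apply continuous_matrix
      intro i j
      simp only [BlkM_apply]
      by_cases hc : (i : ℕ) / 2 = (j : ℕ) / 2
      · simp only [if_pos hc]
        by_cases h1 : (i : ℕ) / 2 < ℓ
        · simp only [hfDdef, dif_pos h1]
          exact continuous_const
        · by_cases h2 : 2 * ((i : ℕ) / 2) + 1 < n
          · simp only [hfDdef, dif_neg h1, if_pos h2, H2_apply_decomp]
            exact continuous_const.add
              (((Complex.continuous_exp.comp
                ((continuous_const.mul Complex.continuous_ofReal).mul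
                  continuous_const))).mul continuous_const)
          · simp only [hfDdef, dif_neg h1, if_neg h2]
            exact continuous_const
      · simp only [if_neg hc]
        exact continuous_const
    exact (continuous_const.matrix_mul hBlk).matrix_mul continuous_const
  rw [mem_closure_iff]
  intro o ho hAo
  have hF0o : F 0 ∈ o := by rw [hF0]; exact hAo
  obtain ⟨δ, hδ, hball⟩ := Metric.mem_nhds_iff.mp
    (hFcont.continuousAt.preimage_mem_nhds (ho.mem_nhds hF0o))
  have hπpos : (0 : ℝ) < Real.pi / ((n : ℝ) + 1) := by positivity
  set T : ℝ := min δ (Real.pi / ((n : ℝ) + 1)) with hTdef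
  have hT : 0 < T := lt_min hδ hπpos
  have hboundT : ∀ c : ℕ, 1 ≤ c → c ≤ n + 1 → ∀ s : ℝ, 0 < s → s < T →
      0 < (c : ℝ) * s ∧ (c : ℝ) * s < Real.pi := by
    intro c hc1 hc2 s hs0 hsT
    have hsπ : s < Real.pi / ((n : ℝ) + 1) := lt_of_lt_of_le hsT (min_le_right _ _)
    refine ⟨mul_pos (by exact_mod_cast hc1) hs0, ?_⟩
    have hb1 : (c : ℝ) * s ≤ ((n : ℝ) + 1) * s := by
      apply mul_le_mul_of_nonneg_right _ hs0.le
      exact_mod_cast hc2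
    have hb2 : ((n : ℝ) + 1) * s < ((n : ℝ) + 1) * (Real.pi / ((n : ℝ) + 1)) :=
      mul_lt_mul_of_pos_left hsπ (by positivity)
    have hb3 : ((n : ℝ) + 1) * (Real.pi / ((n : ℝ) + 1)) = Real.pi := by
      field_simp
    linarith
  set Bad : Set ℝ := ⋃ c ∈ Set.Icc 1 (n + 1), ⋃ k : Fin ℓ,
    {s : ℝ | s ∈ Set.Ioo (0 : ℝ) T ∧
      Complex.exp ((c : ℂ) * (s : ℂ) * Complex.I) = mu k} with hBadDef
  have hBadFin : Bad.Finite := by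
    refine Set.Finite.biUnion (Set.finite_Icc _ _) ?_
    intro c hc
    refine Set.finite_iUnion fun k => Set.Subsingleton.finite ?_
    rintro t1 ⟨⟨ht10, ht1T⟩, he1⟩ t2 ⟨⟨ht20, ht2T⟩, he2⟩
    have hb1 := hboundT c hc.1 hc.2 t1 ht10 ht1T
    have hb2 := hboundT c hc.1 hc.2 t2 ht20 ht2T
    have he : Complex.exp ((((c : ℝ) * t1 : ℝ) : ℂ) * Complex.I)
        = Complex.exp ((((c : ℝ) * t2 : ℝ) : ℂ) * Complex.I) := by
      rw [← exp_nat_mul_I, ← exp_nat_mul_I, he1, he2]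
    have := exp_mul_I_inj hb1.1 hb1.2 hb2.1 hb2.2 he
    have hcpos : (0 : ℝ) < (c : ℝ) := by
      have : (1 : ℕ) ≤ c := hc.1
      exact_mod_cast this
    exact mul_left_cancel₀ (ne_of_gt hcpos) this
  obtain ⟨t, htmem⟩ := ((Set.Ioo_infinite hT).diff hBadFin).nonempty
  obtain ⟨⟨ht0, htT⟩, htBad⟩ := htmem
  have htδ : t < δ := lt_of_lt_of_le htT (min_le_left _ _)
  have hgood : ∀ c : ℕ, 1 ≤ c → c ≤ n + 1 → ∀ k : Fin ℓ,
      Complex.exp ((c : ℂ) * (t : ℂ) * Complex.I) ≠ mu k := by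
    intro c hc1 hc2 k heq
    exact htBad (Set.mem_iUnion₂.mpr ⟨c, ⟨hc1, hc2⟩,
      Set.mem_iUnion.mpr ⟨k, ⟨⟨ht0, htT⟩, heq⟩⟩⟩)
  refine ⟨F t, hball ?_, ?_⟩
  · show t ∈ Metric.ball (0 : ℝ) δ
    rw [Metric.mem_ball, Real.dist_eq, sub_zero, abs_of_pos ht0]
    exact htδ
  -- genCong membership
  set mu' : Fin (n / 2) → ℂ := fun b =>
    if hb : (b : ℕ) < ℓ then mu ⟨(b : ℕ), hb⟩
    else Complex.exp ((((b : ℕ) - ℓ + 1 : ℕ) : ℂ) * (t : ℂ) * Complex.I) with hmu'def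
  have hfDmu : ∀ b (hb : b < n / 2), fD t b = H2 (mu' ⟨b, hb⟩) := by
    intro b hb
    by_cases h1 : b < ℓ
    · simp only [hfDdef, hmu'def, dif_pos h1, Fin.val_mk]
    · have h2 : 2 * b + 1 < n := by omega
      simp only [hfDdef, hmu'def, dif_neg h1, if_pos h2, Fin.val_mk]
  have hIIa' : ∀ i, TypeIIaParam (mu' i) := by
    intro i
    by_cases hb : (i : ℕ) < ℓ
    · simp only [hmu'def, dif_pos hb]
      exact hIIa ⟨(i : ℕ), hb⟩
    · simp only [hmu'def, dif_neg hb]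
      right
      have hc2 : (i : ℕ) - ℓ + 1 ≤ n + 1 := by
        have := i.isLt
        omega
      have hbd := hboundT ((i : ℕ) - ℓ + 1) (by omega) hc2 t ht0 htT
      exact ⟨(((i : ℕ) - ℓ + 1 : ℕ) : ℝ) * t, hbd.1, hbd.2, (exp_nat_mul_I _ t)⟩
  have hdist' : ∀ i i', i ≠ i' → mu' i ≠ mu' i' := by
    intro i i' hne heq
    by_cases h1 : (i : ℕ) < ℓ <;> by_cases h2 : (i' : ℕ) < ℓ
    · simp only [hmu'def, dif_pos h1, dif_pos h2] at heq
      exact hdist ⟨(i : ℕ), h1⟩ ⟨(i' : ℕ), h2⟩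
        (fun hh => hne (Fin.ext (by
          have := congrArg Fin.val hh
          simpa using this))) heq
    · simp only [hmu'def, dif_pos h1, dif_neg h2] at heq
      have hc2 : (i' : ℕ) - ℓ + 1 ≤ n + 1 := by have := i'.isLt; omega
      exact hgood _ (by omega) hc2 ⟨(i : ℕ), h1⟩ heq.symm
    · simp only [hmu'def, dif_neg h1, dif_pos h2] at heq
      have hc2 : (i : ℕ) - ℓ + 1 ≤ n + 1 := by have := i.isLt; omega
      exact hgood _ (by omega) hc2 ⟨(i' : ℕ), h2⟩ heq
    · simp only [hmu'def, dif_neg h1, dif_neg h2] at heq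
      have hc2 : (i : ℕ) - ℓ + 1 ≤ n + 1 := by have := i.isLt; omega
      have hc2' : (i' : ℕ) - ℓ + 1 ≤ n + 1 := by have := i'.isLt; omega
      have hbd := hboundT ((i : ℕ) - ℓ + 1) (by omega) hc2 t ht0 htT
      have hbd' := hboundT ((i' : ℕ) - ℓ + 1) (by omega) hc2' t ht0 htT
      have := exp_nat_inj ht0 (by omega) (by omega) hbd.2 hbd'.2 heq
      exact hne (Fin.ext (by omega))
  by_cases hev : Even n
  · left
    have heq2 : 2 * (n / 2) = n := by
      have := Nat.even_iff.mp hev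
      omega
    refine ⟨hev, by rw [finSize_two]; omega, mu', P * BlkM n Rf,
      hP.mul hRunit, hIIa', hdist', ?_⟩
    rw [reindex_pairH _ mu' (fD t) hfDmu]
  · right
    have hodd : n % 2 = 1 := Nat.odd_iff.mp (Nat.not_even_iff_odd.mp hev)
    have hfD1 : ∀ b, n / 2 ≤ b → fD t b = 1 := by
      intro b hb
      have h1 : ¬ b < ℓ := by omega
      have h2 : ¬ (2 * b + 1 < n) := by omega
      simp only [hfDdef, dif_neg h1, if_neg h2]
    refine ⟨hev, by rw [finSize_two]; omega, mu', P * BlkM n Rf,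
      hP.mul hRunit, hIIa', hdist', ?_⟩
    rw [matone, reindex_dsum_pairH _ mu' (fD t) hfDmu hfD1]
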